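/- Let G = (Y, ∼) be a connected finite graph with n = |Y| vertices and graph distance dist, and assume the sphere sizes are vertex-independent: for all y, y' ∈ Y and all d, |{j : dist(y, j) = d}| = |{j : dist(y', j) = d}| = n_d (as holds for distance-regular and VT⁺ graphs). Fix ε > 0, set γ = 1 / (∑_{d=0}^{δ} n_d · exp(−ε d)) where δ is the diameter of G, and define H : Y → Y → ℝ by H i j = γ · exp(−ε · dist(i, j)). Then: (i) H is a channel matrix (each row sums to 1); (ii) H satisfies ε-differential privacy with respect to ∼; (iii) ∑_{j ∈ Y} max_{i ∈ Y} H i j = n · γ, so for the uniform prior on Y the expected binary-gain utility of H under the optimal guess equals γ, which is the maximal utility among ε-differentially private mechanisms. -/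

import Mathlib

open Finset

private lemma dp_walk_chain {Y Z : Type*} {G : SimpleGraph Y} {H' : Y → Z → ℝ} {ε : ℝ}
    (hpos : ∀ y z, 0 ≤ H' y z) (hε : 0 < ε)
    (hdp : ∀ y y', G.Adj y y' → ∀ z, H' y z ≤ Real.exp ε * H' y' z)
    {y y' : Y} (p : G.Walk y y') (z : Z) :
    H' y z ≤ Real.exp (ε * p.length) * H' y' z := by
  induction p with
  | nil => simp
  | cons h p ih =>
    rename_i u v w
    calc H' u z ≤ Real.exp ε * H' v z := hdp u v h z
    _ ≤ Real.exp ε * (Real.exp (ε * p.length) * H' w z) := by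
        exact mul_le_mul_of_nonneg_left ih (Real.exp_pos _).le
    _ = Real.exp (ε * (p.cons h).length) * H' w z := by
        rw [SimpleGraph.Walk.length_cons]
        push_cast
        rw [mul_add, mul_one, Real.exp_add]
        ring

private lemma dp_dist_chain {Y Z : Type*} {G : SimpleGraph Y} (hconn : G.Connected)
    {H' : Y → Z → ℝ} {ε : ℝ}
    (hpos : ∀ y z, 0 ≤ H' y z) (hε : 0 < ε)
    (hdp : ∀ y y', G.Adj y y' → ∀ z, H' y z ≤ Real.exp ε * H' y' z)
    (y y' : Y) (z : Z) :
    H' y z ≤ Real.exp (ε * G.dist y y') * H' y' z := by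
  obtain ⟨p, hp⟩ := (hconn y y').exists_walk_length_eq_dist
  simpa [hp] using dp_walk_chain hpos hε hdp p z

/-- The sum `∑ j, f (dist y j)` is independent of `y` under the sphere condition. -/
private lemma sum_dist_const {Y : Type*} [Fintype Y] {G : SimpleGraph Y}
    (hconn : G.Connected)
    (hsphere : ∀ y y' : Y, ∀ d : ℕ,
      Nat.card {j : Y // G.dist y j = d} = Nat.card {j : Y // G.dist y' j = d})
    (f : ℕ → ℝ) (y y' : Y) :
    ∑ j, f (G.dist y j) = ∑ j, f (G.dist y' j) := by
  classical
  have key : ∀ a : Y, ∑ j, f (G.dist a j) =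
      ∑ d ∈ Finset.range (Fintype.card Y),
        (Nat.card {j : Y // G.dist a j = d} : ℝ) * f d := by
    intro a
    have hmap : ∀ x ∈ (Finset.univ : Finset Y),
        G.dist a x ∈ Finset.range (Fintype.card Y) := by
      intro j _
      rw [Finset.mem_range]
      obtain ⟨p, hp⟩ := (hconn a j).exists_walk_length_eq_dist
      have h1 := p.bypass_isPath.length_lt
      have h3 := SimpleGraph.dist_le p.bypass
      omega
    rw [← Finset.sum_fiberwise_of_maps_to hmap (fun j => f (G.dist a j))]
    refine Finset.sum_congr rfl fun d _ => ?_
    have h1 : ∑ j ∈ Finset.univ.filter (fun i => G.dist a i = d), f (G.dist a j)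
        = ∑ _j ∈ Finset.univ.filter (fun i => G.dist a i = d), f d :=
      Finset.sum_congr rfl fun j hj => by rw [(Finset.mem_filter.1 hj).2]
    rw [h1, Finset.sum_const, nsmul_eq_mul, Nat.card_eq_fintype_card, Fintype.card_subtype]
  rw [key y, key y']
  exact Finset.sum_congr rfl fun d _ => by rw [hsphere y y' d]

theorem dp_optimal_utility_mechanism {Y : Type*} [Fintype Y]
    (G : SimpleGraph Y) (hconn : G.Connected)
    (hsphere : ∀ y y' : Y, ∀ d : ℕ,
      Nat.card {j : Y // G.dist y j = d} = Nat.card {j : Y // G.dist y' j = d})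
    (ε : ℝ) (hε : 0 < ε) (y₀ : Y)
    (γ : ℝ) (hγ : γ = 1 / ∑ j, Real.exp (-ε * (G.dist y₀ j : ℝ)))
    (H : Y → Y → ℝ)
    (hH : ∀ i j, H i j = γ * Real.exp (-ε * (G.dist i j : ℝ))) :
    (∀ i j, 0 ≤ H i j) ∧
    (∀ i, ∑ j, H i j = 1) ∧
    (∀ i i', G.Adj i i' → ∀ j, H i j ≤ Real.exp ε * H i' j) ∧
    (∑ j, ⨆ i, H i j) = (Fintype.card Y : ℝ) * γ ∧
    (1 / (Fintype.card Y : ℝ)) * (∑ j, ⨆ i, H i j) = γ ∧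
    (∀ (Z : Type) (_ : Fintype Z) (H' : Y → Z → ℝ),
      (∀ y z, 0 ≤ H' y z) → (∀ y, ∑ z, H' y z = 1) →
      (∀ y y', G.Adj y y' → ∀ z, H' y z ≤ Real.exp ε * H' y' z) →
      ∀ g : Z → Y, (∑ z, (1 / (Fintype.card Y : ℝ)) * H' (g z) z) ≤ γ) := by
  classical
  haveI : Nonempty Y := hconn.nonempty
  -- the base sum
  set S : Y → ℝ := fun y => ∑ j, Real.exp (-ε * (G.dist y j : ℝ)) with hS
  have hSconst : ∀ y, S y = S y₀ := fun y =>
    sum_dist_const hconn hsphere (fun d => Real.exp (-ε * d)) y y₀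
  have hSpos : 0 < S y₀ :=
    Finset.sum_pos (fun j _ => Real.exp_pos _) ⟨y₀, Finset.mem_univ _⟩
  have hγpos : 0 < γ := by rw [hγ]; positivity
  have hγS : γ * S y₀ = 1 := by
    rw [hγ]; field_simp; simp [hS, neg_mul]
  have hpos : ∀ i j, 0 ≤ H i j := fun i j => by
    rw [hH]; positivity
  have hrow : ∀ i, ∑ j, H i j = 1 := fun i => by
    have : ∑ j, H i j = γ * S i := by
      rw [hS, Finset.mul_sum]
      exact Finset.sum_congr rfl fun j _ => hH i j
    rw [this, hSconst, hγS]
  have hdp : ∀ i i', G.Adj i i' → ∀ j, H i j ≤ Real.exp ε * H i' j := by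
    intro i i' hadj j
    rw [hH, hH, mul_comm (Real.exp ε), mul_assoc (γ), ← Real.exp_add]
    have htri : (G.dist i' j : ℝ) ≤ G.dist i j + 1 := by
      have h1 := hconn.dist_triangle (u := i') (v := i) (w := j)
      have h2 : G.dist i' i = 1 := by
        rw [SimpleGraph.dist_comm, SimpleGraph.dist_eq_one_iff_adj]; exact hadj
      have : G.dist i' j ≤ G.dist i j + 1 := by omega
      exact_mod_cast this
    refine mul_le_mul_of_nonneg_left (Real.exp_le_exp.2 ?_) hγpos.le
    nlinarith
  have hsup : ∀ j, (⨆ i, H i j) = γ := by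
    intro j
    apply le_antisymm
    · refine ciSup_le fun i => ?_
      rw [hH]
      nth_rewrite 2 [show γ = γ * 1 by ring]
      refine mul_le_mul_of_nonneg_left ?_ hγpos.le
      rw [show (1:ℝ) = Real.exp 0 by simp]
      apply Real.exp_le_exp.2
      have : (0:ℝ) ≤ (G.dist i j : ℝ) := Nat.cast_nonneg _
      nlinarith
    · have := le_ciSup (Finite.bddAbove_range fun i => H i j) j
      calc γ = H j j := by rw [hH]; simp [SimpleGraph.dist_self]
      _ ≤ _ := this
  have hsum : (∑ j, ⨆ i, H i j) = (Fintype.card Y : ℝ) * γ := by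
    simp [hsup, Finset.sum_const, nsmul_eq_mul]
  have hn : (0:ℝ) < Fintype.card Y := by
    exact_mod_cast Fintype.card_pos
  refine ⟨hpos, hrow, hdp, hsum, by rw [hsum]; field_simp, ?_⟩
  intro Z _ H' h'pos h'row h'dp g
  have key : ∀ z, H' (g z) z * S y₀ ≤ ∑ y, H' y z := by
    intro z
    have : ∀ y : Y, H' (g z) z * Real.exp (-ε * (G.dist (g z) y : ℝ)) ≤ H' y z := by
      intro y
      have h := dp_dist_chain hconn h'pos hε h'dp (g z) y z
      have hexp : (0:ℝ) < Real.exp (-ε * (G.dist (g z) y : ℝ)) := Real.exp_pos _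
      have hcancel : Real.exp (ε * (G.dist (g z) y : ℝ)) *
          Real.exp (-ε * (G.dist (g z) y : ℝ)) = 1 := by
        rw [← Real.exp_add, neg_mul, add_neg_cancel, Real.exp_zero]
      calc H' (g z) z * Real.exp (-ε * (G.dist (g z) y : ℝ))
          ≤ (Real.exp (ε * (G.dist (g z) y : ℝ)) * H' y z) *
            Real.exp (-ε * (G.dist (g z) y : ℝ)) :=
            mul_le_mul_of_nonneg_right h hexp.le
      _ = (Real.exp (ε * (G.dist (g z) y : ℝ)) *
            Real.exp (-ε * (G.dist (g z) y : ℝ))) * H' y z := by ring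
      _ = H' y z := by rw [hcancel, one_mul]
    calc H' (g z) z * S y₀ = H' (g z) z * S (g z) := by rw [hSconst (g z)]
    _ = ∑ y, H' (g z) z * Real.exp (-ε * (G.dist (g z) y : ℝ)) := by
        rw [hS, Finset.mul_sum]
    _ ≤ ∑ y, H' y z := Finset.sum_le_sum fun y _ => this y
  have total : ∑ z, H' (g z) z ≤ (Fintype.card Y : ℝ) / S y₀ := by
    have h1 : (∑ z, H' (g z) z) * S y₀ ≤ ∑ z, ∑ y, H' y z := by
      rw [Finset.sum_mul]
      exact Finset.sum_le_sum fun z _ => key z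
    have h2 : ∑ z, ∑ y, H' y z = (Fintype.card Y : ℝ) := by
      rw [Finset.sum_comm]
      simp [h'row, Finset.sum_const, nsmul_eq_mul]
    rw [le_div_iff₀ hSpos]
    linarith
  calc ∑ z, (1 / (Fintype.card Y : ℝ)) * H' (g z) z
      = (1 / (Fintype.card Y : ℝ)) * ∑ z, H' (g z) z := by rw [Finset.mul_sum]
  _ ≤ (1 / (Fintype.card Y : ℝ)) * ((Fintype.card Y : ℝ) / S y₀) := by
      exact mul_le_mul_of_nonneg_left total (by positivity)
  _ = γ := by rw [hγ]; field_simp; simp [hS, neg_mul]
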